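/- Let n ≥ 2 and let X be a ℤ₂ⁿ-equivariant triangulation of the sphere S^{n−1} in ℝⁿ with exactly 2n vertices. Then every vertex of X has at most two nonzero coordinates. -/

import Mathlib

open Set

noncomputable section

/-- The sign-change map `x ↦ (ε₁x₁, …, εₙxₙ)` on `EuclideanSpace ℝ (Fin n)`. -/
def signMap {n : ℕ} (ε : Fin n → ℝ) (x : EuclideanSpace ℝ (Fin n)) :
    EuclideanSpace ℝ (Fin n) :=
  WithLp.toLp 2 (fun i => ε i * x i)

/-- `X` is a `ℤ₂ⁿ`-equivariant triangulation of the unit sphere `S^{n-1} ⊆ ℝⁿ`. -/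
structure IsEquivSphereTriangulation (n : ℕ)
    (X : Geometry.SimplicialComplex ℝ (EuclideanSpace ℝ (Fin n))) : Prop where
  finite : X.faces.Finite
  zero_not_mem : (0 : EuclideanSpace ℝ (Fin n)) ∉ X.space
  radial_homeo : ∃ φ : X.space ≃ₜ (Metric.sphere (0 : EuclideanSpace ℝ (Fin n)) 1),
      ∀ x : X.space, (φ x : EuclideanSpace ℝ (Fin n)) =
        ‖(x : EuclideanSpace ℝ (Fin n))‖⁻¹ • (x : EuclideanSpace ℝ (Fin n))
  equivariant : ∀ ε : Fin n → ℝ, (∀ i, ε i = 1 ∨ ε i = -1) →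
      ∀ s ∈ X.faces, ∃ t ∈ X.faces,
        (t : Set (EuclideanSpace ℝ (Fin n))) = signMap ε '' (s : Set (EuclideanSpace ℝ (Fin n)))

/-! ### Auxiliary lemmas -/

open Classical in
/-- The orbit of a vertex under sign changes consists entirely of vertices. -/
lemma orbit_subset_vertices {n : ℕ}
    {X : Geometry.SimplicialComplex ℝ (EuclideanSpace ℝ (Fin n))}
    (hX : IsEquivSphereTriangulation n X) {v : EuclideanSpace ℝ (Fin n)}
    (hv : v ∈ X.vertices) (w : EuclideanSpace ℝ (Fin n))
    (hw : ∀ i, |w i| = |v i|) : w ∈ X.vertices := by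
  set ε : Fin n → ℝ := fun i => if v i = 0 then 1 else w i / v i with hε
  have hε1 : ∀ i, ε i = 1 ∨ ε i = -1 := by
    intro i
    by_cases h : v i = 0
    · left; simp [hε, h]
    · rcases abs_eq_abs.mp (hw i) with h' | h'
      · left; simp [hε, h, h', div_self h]
      · right; simp [hε, h, h', neg_div, div_self h]
  have hsv : signMap ε v = w := by
    ext i
    by_cases h : v i = 0
    · have : |w i| = 0 := by rw [hw i, h, abs_zero]
      have hw0 : w i = 0 := abs_eq_zero.mp this
      simp [signMap, hε, h, hw0]
    · simp [signMap, hε, h, div_mul_cancel₀ _ h]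
  obtain ⟨t, ht, hteq⟩ := hX.equivariant ε hε1 {v} hv
  have : (t : Set (EuclideanSpace ℝ (Fin n))) = {w} := by
    rw [hteq, Finset.coe_singleton, Set.image_singleton, hsv]
  have ht' : t = {w} := Finset.coe_eq_singleton.mp this
  rw [Geometry.SimplicialComplex.mem_vertices, ← ht']
  exact ht

open Classical in
/-- The cardinality of the full sign orbit of `v` is `2 ^ (number of nonzero coords)`. -/
lemma orbit_ncard {n : ℕ} (v : EuclideanSpace ℝ (Fin n)) :
    {w : EuclideanSpace ℝ (Fin n) | ∀ i, |w i| = |v i|}.ncard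
      = 2 ^ {i : Fin n | v i ≠ 0}.ncard := by
  set g : ({i : Fin n // v i ≠ 0} → Bool) → EuclideanSpace ℝ (Fin n) :=
    fun s => WithLp.toLp 2 (fun i => if h : v i ≠ 0 then (if s ⟨i, h⟩ then v i else -v i) else 0) with hg
  have hinj : Function.Injective g := by
    intro s t hst
    funext i
    have := congrArg (fun z : EuclideanSpace ℝ (Fin n) => z i.1) hst
    simp only [hg, PiLp.toLp_apply, dif_pos i.2] at this
    by_contra hne
    rcases Bool.eq_false_or_eq_true (s i) with h1 | h1 <;>
      rcases Bool.eq_false_or_eq_true (t i) with h2 | h2 <;>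
      simp_all <;> [exact i.2 (by linarith); exact i.2 (by linarith)]
  have hrange : Set.range g = {w : EuclideanSpace ℝ (Fin n) | ∀ i, |w i| = |v i|} := by
    ext w
    constructor
    · rintro ⟨s, rfl⟩ i
      by_cases h : v i ≠ 0
      · simp only [hg, PiLp.toLp_apply, dif_pos h]
        split <;> simp [abs_neg]
      · push_neg at h
        simp [hg, h]
    · intro hwm
      refine ⟨fun i => decide (w i.1 = v i.1), ?_⟩
      ext i
      by_cases h : v i ≠ 0
      · simp only [hg, PiLp.toLp_apply, dif_pos h]
        rcases abs_eq_abs.mp (hwm i) with h' | h'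
        · simp [h']
        · have : w i ≠ v i := by
            rw [h']; intro hc
            exact h (by linarith [hc])
          simp only [this, if_false, Bool.false_eq_true, decide_eq_true_eq]
          exact h'.symm
      · push_neg at h
        have : |w i| = 0 := by rw [hwm i, h, abs_zero]
        simp [hg, h, abs_eq_zero.mp this]
  have hcard1 : {w : EuclideanSpace ℝ (Fin n) | ∀ i, |w i| = |v i|}.ncard
      = Nat.card ({i : Fin n // v i ≠ 0} → Bool) := by
    rw [← hrange, ← Nat.card_coe_set_eq]
    exact Nat.card_range_of_injective hinj
  rw [hcard1, Nat.card_eq_fintype_card, Fintype.card_fun, Fintype.card_bool]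
  congr 1
  rw [← Nat.card_coe_set_eq, Nat.card_eq_fintype_card]
  rfl

/-- The hyperplane `{x | x i = 0}` is convex. -/
lemma convex_coord_hyperplane {n : ℕ} (i : Fin n) :
    Convex ℝ {x : EuclideanSpace ℝ (Fin n) | x i = 0} := by
  intro x hx y hy a b _ _ _
  have : (a • x + b • y) i = a * x i + b * y i := rfl
  simp only [Set.mem_setOf_eq] at hx hy ⊢
  rw [this, hx, hy, mul_zero, mul_zero, add_zero]

/-- Every coordinate is nonzero at some vertex. -/
lemma exists_vertex_coord_ne_zero {n : ℕ}
    {X : Geometry.SimplicialComplex ℝ (EuclideanSpace ℝ (Fin n))}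
    (hX : IsEquivSphereTriangulation n X) (i : Fin n) :
    ∃ v ∈ X.vertices, v i ≠ 0 := by
  by_contra hcon
  push_neg at hcon
  obtain ⟨φ, hφ⟩ := hX.radial_homeo
  have hu : EuclideanSpace.single i (1 : ℝ) ∈
      Metric.sphere (0 : EuclideanSpace ℝ (Fin n)) 1 := by
    simp [EuclideanSpace.norm_single]
  set x : X.space := φ.symm ⟨EuclideanSpace.single i (1 : ℝ), hu⟩ with hxdef
  have hx : (φ x : EuclideanSpace ℝ (Fin n)) = EuclideanSpace.single i (1 : ℝ) := by
    rw [hxdef, Homeomorph.apply_symm_apply]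
  have hx2 : ‖(x : EuclideanSpace ℝ (Fin n))‖⁻¹ • (x : EuclideanSpace ℝ (Fin n))
      = EuclideanSpace.single i (1 : ℝ) := by rw [← hφ x, hx]
  have hxmem : (x : EuclideanSpace ℝ (Fin n)) ∈ X.space := x.2
  have hxne : (x : EuclideanSpace ℝ (Fin n)) ≠ 0 := fun h => hX.zero_not_mem (h ▸ hxmem)
  have hnorm : ‖(x : EuclideanSpace ℝ (Fin n))‖ ≠ 0 := norm_ne_zero_iff.mpr hxne
  -- the i-th coordinate of x is nonzero
  have hxi : (x : EuclideanSpace ℝ (Fin n)) i ≠ 0 := by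
    have := congrFun (congrArg (fun z : EuclideanSpace ℝ (Fin n) => (z : Fin n → ℝ)) hx2) i
    have h1 : ‖(x : EuclideanSpace ℝ (Fin n))‖⁻¹ * (x : EuclideanSpace ℝ (Fin n)) i = 1 := by
      simpa [EuclideanSpace.single_apply] using this
    intro hc
    rw [hc, mul_zero] at h1
    exact one_ne_zero h1.symm
  -- but the space lies in the hyperplane {z | z i = 0}
  obtain ⟨s, hs, hxs⟩ := Geometry.SimplicialComplex.mem_space_iff.mp hxmem
  have hsub : (s : Set (EuclideanSpace ℝ (Fin n))) ⊆ {z | z i = 0} := by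
    intro y hy
    have hyv : y ∈ X.vertices := by
      rw [Geometry.SimplicialComplex.mem_vertices]
      exact X.down_closed hs (Finset.singleton_subset_iff.mpr hy) (Finset.singleton_nonempty y)
    exact hcon y hyv
  have : (x : EuclideanSpace ℝ (Fin n)) ∈ {z : EuclideanSpace ℝ (Fin n) | z i = 0} :=
    convexHull_min hsub (convex_coord_hyperplane i) hxs
  exact hxi this

lemma two_mul_le_two_pow (k : ℕ) : 2 * k ≤ 2 ^ k := by
  induction k with
  | zero => simp
  | succ k ih =>
    have := Nat.lt_two_pow_self (n := k)
    rw [pow_succ]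
    omega

lemma two_mul_lt_two_pow {k : ℕ} (hk : 3 ≤ k) : 2 * k < 2 ^ k := by
  induction k with
  | zero => omega
  | succ k ih =>
    rcases Nat.lt_or_ge k 3 with h | h
    · interval_cases k <;> simp_all <;> omega
    · have := ih (by omega)
      have h2 : 2 ≤ 2 ^ k := Nat.one_lt_two_pow_iff.mpr (by omega)
      rw [pow_succ]
      omega

open Classical in
theorem stmt3 (n : ℕ) (hn : 2 ≤ n)
    (X : Geometry.SimplicialComplex ℝ (EuclideanSpace ℝ (Fin n)))
    (hX : IsEquivSphereTriangulation n X)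
    (hcard : X.vertices.ncard = 2 * n) :
    ∀ v ∈ X.vertices, {i : Fin n | v i ≠ 0}.ncard ≤ 2 := by
  -- vertices form a finite set
  have hVfin : X.vertices.Finite := by
    have : X.vertices = (fun x : EuclideanSpace ℝ (Fin n) => ({x} : Finset _)) ⁻¹' X.faces :=
      rfl
    rw [this]
    exact hX.finite.preimage (fun a _ b _ h => Finset.singleton_injective h)
  set V : Finset (EuclideanSpace ℝ (Fin n)) := hVfin.toFinset with hV
  have hVmem : ∀ w, w ∈ V ↔ w ∈ X.vertices := fun w => hVfin.mem_toFinset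
  set A : EuclideanSpace ℝ (Fin n) → (Fin n → ℝ) := fun v i => |v i| with hA
  set B : Finset (Fin n → ℝ) := V.image A with hB
  set ka : (Fin n → ℝ) → ℕ := fun a => {i : Fin n | a i ≠ 0}.ncard with hka
  -- total count
  have hVcard : V.card = 2 * n := by
    rw [← hcard, Set.ncard_eq_toFinset_card _ hVfin]
  have h1 : V.card = ∑ a ∈ B, (V.filter (fun w => A w = a)).card :=
    Finset.card_eq_sum_card_fiberwise (fun x hx => Finset.mem_image_of_mem A hx)
  -- each fiber is a full orbit
  have h2 : ∀ a ∈ B, (V.filter (fun w => A w = a)).card = 2 ^ ka a := by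
    intro a ha
    obtain ⟨v, hvV, hva⟩ := Finset.mem_image.mp ha
    have hvvert : v ∈ X.vertices := (hVmem v).mp hvV
    have hset : ((V.filter (fun w => A w = a)) : Set (EuclideanSpace ℝ (Fin n)))
        = {w | ∀ i, |w i| = |v i|} := by
      ext w
      simp only [Finset.coe_filter, Set.mem_setOf_eq, hVmem]
      constructor
      · rintro ⟨-, hw⟩ i
        rw [← hva] at hw
        exact congrFun hw i
      · intro hw
        refine ⟨orbit_subset_vertices hX hvvert w hw, ?_⟩
        rw [← hva]
        funext i
        exact hw i
    have : (V.filter (fun w => A w = a)).card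
        = {w : EuclideanSpace ℝ (Fin n) | ∀ i, |w i| = |v i|}.ncard := by
      rw [← hset, Set.ncard_coe_finset]
    rw [this, orbit_ncard]
    congr 1
    have : {i : Fin n | a i ≠ 0} = {i : Fin n | v i ≠ 0} := by
      ext i
      rw [← hva]
      simp [hA, abs_ne_zero]
    rw [hka]
    simp only [this]
  -- each coordinate contributes to some fiber
  have h3 : n ≤ ∑ a ∈ B, ka a := by
    have hch : ∀ i : Fin n, ∃ v, v ∈ X.vertices ∧ v i ≠ 0 := by
      intro i
      obtain ⟨v, hv1, hv2⟩ := exists_vertex_coord_ne_zero hX i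
      exact ⟨v, hv1, hv2⟩
    choose g hg1 hg2 using hch
    have hmaps : ∀ i : Fin n, i ∈ (Finset.univ : Finset (Fin n)) → A (g i) ∈ B :=
      fun i _ => Finset.mem_image_of_mem A ((hVmem (g i)).mpr (hg1 i))
    have hcount : (Finset.univ : Finset (Fin n)).card
        = ∑ a ∈ B, (Finset.univ.filter (fun i : Fin n => A (g i) = a)).card :=
      Finset.card_eq_sum_card_fiberwise hmaps
    have hfib : ∀ a ∈ B, (Finset.univ.filter (fun i : Fin n => A (g i) = a)).card ≤ ka a := by
      intro a _
      have hsub : ((Finset.univ.filter (fun i : Fin n => A (g i) = a)) :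
          Set (Fin n)) ⊆ {i : Fin n | a i ≠ 0} := by
        intro i hi
        simp only [Finset.coe_filter, Set.mem_setOf_eq] at hi
        have : a i = |g i i| := by rw [← hi.2]
        simp only [Set.mem_setOf_eq, this, abs_ne_zero]
        exact hg2 i
      calc (Finset.univ.filter (fun i : Fin n => A (g i) = a)).card
          = ((Finset.univ.filter (fun i : Fin n => A (g i) = a)) : Set (Fin n)).ncard := by
            rw [Set.ncard_coe_finset]
        _ ≤ {i : Fin n | a i ≠ 0}.ncard := Set.ncard_le_ncard hsub (Set.toFinite _)
        _ = ka a := rfl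
    calc n = (Finset.univ : Finset (Fin n)).card := by simp
      _ = ∑ a ∈ B, (Finset.univ.filter (fun i : Fin n => A (g i) = a)).card := hcount
      _ ≤ ∑ a ∈ B, ka a := Finset.sum_le_sum hfib
  -- conclude
  intro v hv
  by_contra hcon
  have hk3 : 3 ≤ {i : Fin n | v i ≠ 0}.ncard := by omega
  have hvV : v ∈ V := (hVmem v).mpr hv
  have haB : A v ∈ B := Finset.mem_image_of_mem A hvV
  have hkav : ka (A v) = {i : Fin n | v i ≠ 0}.ncard := by
    have hset : {i : Fin n | A v i ≠ 0} = {i : Fin n | v i ≠ 0} := by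
      ext i
      simp [hA, abs_ne_zero]
    rw [hka]
    simp only [hset]
  have hstrict : ∑ a ∈ B, 2 * ka a < ∑ a ∈ B, 2 ^ ka a := by
    refine Finset.sum_lt_sum (fun a _ => two_mul_le_two_pow (ka a)) ⟨A v, haB, ?_⟩
    exact two_mul_lt_two_pow (by omega)
  have htot : ∑ a ∈ B, 2 ^ ka a = 2 * n := by
    rw [← Finset.sum_congr rfl h2, ← h1, hVcard]
  have : 2 * n ≤ ∑ a ∈ B, 2 * ka a := by
    rw [← Finset.mul_sum]
    omega
  omega
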